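/- Assume (H0): (i) for all s ∈ [0,τ], x⁰ ∈ X(0), xˢ ∈ X(s) and y ∈ Y, the function θ ↦ L(s, x⁰+θ(xˢ−x⁰), y) is absolutely continuous on [0,1], so that L(s,xˢ,y) = L(s,x⁰,y) + ∫₀¹ d_xL(s, x⁰+θ(xˢ−x⁰), y; xˢ−x⁰) dθ; (ii) for all such s, x⁰, xˢ, y and all φ ∈ X, the directional derivative d_xL(s, x⁰+θ(xˢ−x⁰), y; φ) exists for almost all θ ∈ [0,1] and θ ↦ d_xL(s, x⁰+θ(xˢ−x⁰), y; φ) belongs to L¹(0,1). Assume further (H1): for all s ∈ [0,τ], g(s) is finite, X(s) = {xˢ} is a singleton, and Y(0,x⁰) = {p⁰} is a singleton; (H2): the limit d_sL(0,x⁰,p⁰) = lim_{s→0⁺} (L(s,x⁰,p⁰) − L(0,x⁰,p⁰))/s exists; (H3): the limit R(x⁰,p⁰) = lim_{s→0⁺} ∫₀¹ d_xL(s, x⁰+θ(xˢ−x⁰), p⁰; (xˢ−x⁰)/s) dθ exists. Then dg(0) = lim_{s→0⁺} (g(s) − g(0))/s exists and dg(0) = d_sL(0,x⁰,p⁰) +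 R(x⁰,p⁰). -/

import Mathlib

open Filter Topology MeasureTheory

noncomputable section

/-- `sup_{y ∈ Y} L(s,x,y)`, valued in `EReal`. -/
def supY {X Y : Type*} (L : ℝ → X → Y → ℝ) (s : ℝ) (x : X) : EReal :=
  ⨆ y : Y, (L s x y : EReal)

/-- The parametrized minimax `g(s) = inf_{x ∈ X} sup_{y ∈ Y} L(s,x,y)`. -/
def gfun {X Y : Type*} (L : ℝ → X → Y → ℝ) (s : ℝ) : EReal :=
  ⨅ x : X, supY L s x

/-- The set `X(s)` of minimizers for the minimax. -/
def Xset {X Y : Type*} (L : ℝ → X → Y → ℝ) (s : ℝ) : Set X :=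
  {x | gfun L s = supY L s x}

/-- The set `Y(s,x)` of adjoint states: solutions `p` of
`d_x L(s,x,p;φ) = 0` for all `φ ∈ X`, where `DL` denotes the directional
derivative `d_x L`. -/
def Yadj {X Y : Type*} (DL : ℝ → X → Y → X → ℝ) (s : ℝ) (x : X) : Set Y :=
  {p | ∀ φ : X, DL s x p φ = 0}

/-- **Delfour–Sturm theorem on the one-sided derivative of a parametrized minimax.**
Under (H0) (absolute continuity along segments, encoded through the resulting
integral identity, together with a.e. existence and integrability of the
directional derivatives `d_x L`), (H1) (finiteness of `g(s)` and singleton sets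
`X(s) = {xˢ}`, `Y(0,x⁰) = {p⁰}`), (H2) (existence of `d_s L(0,x⁰,p⁰)`) and (H3)
(existence of the limit `R(x⁰,p⁰)` of the averaged-adjoint remainder), the
one-sided derivative `dg(0) = lim_{s→0⁺} (g(s)-g(0))/s` exists and
`dg(0) = d_s L(0,x⁰,p⁰) + R(x⁰,p⁰)`. -/
theorem stmt_3 {X Y : Type*} [AddCommGroup X] [Module ℝ X] [AddCommGroup Y] [Module ℝ Y]
    (τ : ℝ) (hτ : 0 < τ)
    (L : ℝ → X → Y → ℝ)
    (haff : ∀ (s : ℝ) (x : X) (y z : Y) (t : ℝ),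
      L s x (t • y + (1 - t) • z) = t * L s x y + (1 - t) * L s x z)
    (DL : ℝ → X → Y → X → ℝ)
    -- (H0)(ii): the directional derivative `d_x L` exists for a.e. `θ ∈ [0,1]`
    -- along the segment `[x⁰, xˢ]`, and is integrable in `θ`
    (hDL : ∀ s ∈ Set.Icc (0:ℝ) τ, ∀ x0 ∈ Xset L 0, ∀ xs ∈ Xset L s, ∀ (y : Y) (φ : X),
      (∀ᵐ θ ∂(volume.restrict (Set.Icc (0:ℝ) 1)),
        Tendsto (fun t : ℝ =>
            (L s (x0 + θ • (xs - x0) + t • φ) y - L s (x0 + θ • (xs - x0)) y) / t)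
          (𝓝[>] 0) (𝓝 (DL s (x0 + θ • (xs - x0)) y φ)))
      ∧ IntervalIntegrable (fun θ : ℝ => DL s (x0 + θ • (xs - x0)) y φ) volume 0 1)
    -- (H0)(i): absolute continuity of `θ ↦ L(s, x⁰+θ(xˢ-x⁰), y)`, expressed through
    -- the fundamental-theorem-of-calculus identity it implies
    (hAC : ∀ s ∈ Set.Icc (0:ℝ) τ, ∀ x0 ∈ Xset L 0, ∀ xs ∈ Xset L s, ∀ y : Y,
      L s xs y = L s x0 y + ∫ θ in (0:ℝ)..1, DL s (x0 + θ • (xs - x0)) y (xs - x0))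
    -- (H1)
    (xsel : ℝ → X) (p0 : Y)
    (hfin : ∀ s ∈ Set.Icc (0:ℝ) τ, ∃ c : ℝ, gfun L s = (c : EReal))
    (hXs : ∀ s ∈ Set.Icc (0:ℝ) τ, Xset L s = {xsel s})
    (hY0 : Yadj DL 0 (xsel 0) = {p0})
    -- (H2)
    (dsL : ℝ)
    (hH2 : Tendsto (fun s : ℝ => (L s (xsel 0) p0 - L 0 (xsel 0) p0) / s)
      (𝓝[>] 0) (𝓝 dsL))
    -- (H3)
    (R : ℝ)
    (hH3 : Tendsto (fun s : ℝ =>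
        ∫ θ in (0:ℝ)..1,
          DL s (xsel 0 + θ • (xsel s - xsel 0)) p0 ((1 / s) • (xsel s - xsel 0)))
      (𝓝[>] 0) (𝓝 R)) :
    Tendsto (fun s : ℝ => ((gfun L s).toReal - (gfun L 0).toReal) / s)
      (𝓝[>] 0) (𝓝 (dsL + R)) := by
  have hx0 : xsel 0 ∈ Xset L 0 := by
    rw [hXs 0 ⟨le_refl 0, hτ.le⟩]; rfl
  -- value of g on [0, τ]
  have hval : ∀ s ∈ Set.Icc (0:ℝ) τ, (gfun L s).toReal = L s (xsel s) p0 := by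
    intro s hs
    obtain ⟨c, hc⟩ := hfin s hs
    have hx : gfun L s = supY L s (xsel s) := by
      have : xsel s ∈ Xset L s := by rw [hXs s hs]; rfl
      exact this
    have hsup : supY L s (xsel s) = (c : EReal) := hx ▸ hc
    have hle : ∀ y : Y, L s (xsel s) y ≤ c := by
      intro y
      have : ((L s (xsel s) y : ℝ) : EReal) ≤ (c : EReal) := by
        rw [← hsup]
        exact le_iSup (fun y : Y => ((L s (xsel s) y : ℝ) : EReal)) y
      exact_mod_cast this
    have hconst : ∀ y : Y, L s (xsel s) y = L s (xsel s) p0 := by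
      intro y
      by_contra hne
      set a := L s (xsel s) y with ha
      set b := L s (xsel s) p0 with hb
      have hab : a - b ≠ 0 := sub_ne_zero.mpr hne
      set t : ℝ := (c - b + 1) / (a - b) with ht
      have := haff s (xsel s) y p0 t
      have hval' : L s (xsel s) (t • y + (1 - t) • p0) = c + 1 := by
        rw [this, ← ha, ← hb]
        have htab : t * (a - b) = c - b + 1 := by rw [ht]; exact div_mul_cancel₀ _ hab
        linear_combination htab
      have := hle (t • y + (1 - t) • p0)
      rw [hval'] at this
      linarith
    have hsup2 : supY L s (xsel s) = ((L s (xsel s) p0 : ℝ) : EReal) :=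
      le_antisymm (iSup_le fun y => by rw [hconst y])
        (le_iSup (fun y : Y => ((L s (xsel s) y : ℝ) : EReal)) p0)
    rw [hx, hsup2, EReal.toReal_coe]
  -- positive homogeneity of DL, a.e. in θ
  have hkey : ∀ s ∈ Set.Ioo (0:ℝ) τ,
      (∫ θ in (0:ℝ)..1,
        DL s (xsel 0 + θ • (xsel s - xsel 0)) p0 ((1 / s) • (xsel s - xsel 0)))
      = (1 / s) * ∫ θ in (0:ℝ)..1,
        DL s (xsel 0 + θ • (xsel s - xsel 0)) p0 (xsel s - xsel 0) := by
    intro s hs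
    have hsIcc : s ∈ Set.Icc (0:ℝ) τ := ⟨hs.1.le, hs.2.le⟩
    have hxs : xsel s ∈ Xset L s := by rw [hXs s hsIcc]; rfl
    set v : X := xsel s - xsel 0 with hv
    have h1 := (hDL s hsIcc (xsel 0) hx0 (xsel s) hxs p0 v).1
    have h2 := (hDL s hsIcc (xsel 0) hx0 (xsel s) hxs p0 ((1 / s) • v)).1
    have hs0 : (0:ℝ) < s := hs.1
    have hae : ∀ᵐ θ ∂(volume.restrict (Set.Icc (0:ℝ) 1)),
        DL s (xsel 0 + θ • v) p0 ((1 / s) • v)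
          = (1 / s) * DL s (xsel 0 + θ • v) p0 v := by
      filter_upwards [h1, h2] with θ h1θ h2θ
      set x : X := xsel 0 + θ • v with hx'
      -- the map t ↦ t * (1/s) sends 𝓝[>]0 to 𝓝[>]0
      have hmap : Tendsto (fun t : ℝ => t * (1 / s)) (𝓝[>] 0) (𝓝[>] 0) := by
        apply tendsto_nhdsWithin_of_tendsto_nhds_of_eventually_within
        · have : Tendsto (fun t : ℝ => t * (1 / s)) (𝓝 0) (𝓝 (0 * (1 / s))) :=
            (tendsto_id.mul_const (1 / s))
          simpa using this.mono_left nhdsWithin_le_nhds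
        · filter_upwards [self_mem_nhdsWithin] with t ht
          exact Set.mem_Ioi.mpr (mul_pos (Set.mem_Ioi.mp ht) (by positivity))
      have hcomp : Tendsto
          (fun t : ℝ => (1 / s) * ((L s (x + (t * (1 / s)) • v) p0 - L s x p0) / (t * (1 / s))))
          (𝓝[>] 0) (𝓝 ((1 / s) * DL s x p0 v)) :=
        (h1θ.comp hmap).const_mul (1 / s)
      have heq : ∀ᶠ t : ℝ in 𝓝[>] 0,
          (1 / s) * ((L s (x + (t * (1 / s)) • v) p0 - L s x p0) / (t * (1 / s)))
            = (L s (x + t • ((1 / s) • v)) p0 - L s x p0) / t := by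
        filter_upwards [self_mem_nhdsWithin] with t ht
        have ht0 : t ≠ 0 := ne_of_gt ht
        have hs0' : s ≠ 0 := ne_of_gt hs0
        rw [smul_smul]
        rw [mul_comm t (1 / s)]
        field_simp
      have hcomp' : Tendsto
          (fun t : ℝ => (L s (x + t • ((1 / s) • v)) p0 - L s x p0) / t)
          (𝓝[>] 0) (𝓝 ((1 / s) * DL s x p0 v)) := hcomp.congr' heq
      exact tendsto_nhds_unique h2θ hcomp'
    have hae' : ∀ᵐ θ ∂(volume : Measure ℝ), θ ∈ Set.uIoc (0:ℝ) 1 →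
        DL s (xsel 0 + θ • v) p0 ((1 / s) • v)
          = (1 / s) * DL s (xsel 0 + θ • v) p0 v := by
      have := (ae_restrict_iff' measurableSet_Icc).mp hae
      filter_upwards [this] with θ hθ hmem
      have : θ ∈ Set.Icc (0:ℝ) 1 := by
        rw [Set.uIoc_of_le (by norm_num : (0:ℝ) ≤ 1)] at hmem
        exact Set.Ioc_subset_Icc_self hmem
      exact hθ this
    rw [intervalIntegral.integral_congr_ae hae', intervalIntegral.integral_const_mul]
  -- the limit
  have hfinal : Tendsto (fun s : ℝ => (L s (xsel 0) p0 - L 0 (xsel 0) p0) / s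
      + ∫ θ in (0:ℝ)..1,
          DL s (xsel 0 + θ • (xsel s - xsel 0)) p0 ((1 / s) • (xsel s - xsel 0)))
      (𝓝[>] 0) (𝓝 (dsL + R)) := hH2.add hH3
  apply hfinal.congr'
  filter_upwards [Ioo_mem_nhdsGT_of_mem (by constructor <;> [rfl; exact hτ] :
      (0:ℝ) ∈ Set.Ico 0 τ)] with s hs
  have hsIcc : s ∈ Set.Icc (0:ℝ) τ := ⟨hs.1.le, hs.2.le⟩
  have hxs : xsel s ∈ Xset L s := by rw [hXs s hsIcc]; rfl
  have hAC' := hAC s hsIcc (xsel 0) hx0 (xsel s) hxs p0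
  rw [hval s hsIcc, hval 0 ⟨le_refl 0, hτ.le⟩, hAC', hkey s hs]
  have hs0 : s ≠ 0 := ne_of_gt hs.1
  field_simp
  ring
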